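/- arXiv:1711.01462 — 3 statements merged into one kernel-verified Lean document; each statement's English description precedes it below -/
import Mathlib

section
/- Let H be a normal subgroup of π₁(X,x₀) and X a locally path connected strong H-SLT space at x₀. Then the endpoint projection p_H : X̃_H^{wh} → X has the unique path lifting property if and only if p_H : X̃_H^{l} → X has the unique path lifting property. -/
open CategoryTheory unitInterval
open scoped Topology

attribute [local instance] Path.Homotopic.setoid

noncomputable section

/-- The homotopy class of a loop as an element of the fundamental group. -/
def loopClass {X : Type*} [TopologicalSpace X] {x : X} (γ : Path x x) :
    FundamentalGroup X x :=
  FundamentalGroup.fromPath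
    (⟦γ⟧ : Path.Homotopic.Quotient x x)

variable {X : Type*} [TopologicalSpace X]

/-- The Spanier group of a family of subsets of `X`, based at `x`: the subgroup generated by
classes `[α∗β∗α⁻¹]` where `α` is a path from `x` and `β` is a loop inside a member of `𝒰`. -/
def spanierGroupAt (x : X) (𝒰 : Set (Set X)) : Subgroup (FundamentalGroup X x) :=
  Subgroup.closure {g | ∃ (y : X) (α : Path x y) (β : Path y y) (U : Set X),
    U ∈ 𝒰 ∧ (∀ t, β t ∈ U) ∧ g = loopClass (α.trans (β.trans α.symm))}

/-- `𝒰` is an open cover of `X`. -/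
def IsOpenCover (𝒰 : Set (Set X)) : Prop := (∀ U ∈ 𝒰, IsOpen U) ∧ ⋃₀ 𝒰 = Set.univ

/-- `X` is a strong `H`-SLT space at `x₀`: for every `x ∈ X` and every open neighborhood `U`
of `x₀` there is an open neighborhood `V` of `x` such that for every loop `β` in `V` based at
`x` and every path `α` from `x₀` to `x` there is a loop `λ` in `U` based at `x₀` with
`[α∗β∗α⁻¹∗λ⁻¹] ∈ H`. -/
def StrongHSLTAt (x₀ : X) (H : Subgroup (FundamentalGroup X x₀)) : Prop :=
  ∀ (x : X) (U : Set X), IsOpen U → x₀ ∈ U →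
    ∃ V : Set X, IsOpen V ∧ x ∈ V ∧
      ∀ (β : Path x x), (∀ t, β t ∈ V) → ∀ (α : Path x₀ x),
        ∃ lam : Path x₀ x₀, (∀ t, lam t ∈ U) ∧
          loopClass (α.trans (β.trans α.symm)) * (loopClass lam)⁻¹ ∈ H

/-- The relation on paths from `x₀`: `α ∼ β` iff they share the endpoint and
`[α∗β⁻¹] ∈ K`. -/
def hrel {x₀ : X} (K : Subgroup (FundamentalGroup X x₀)) :
    (Σ y : X, Path x₀ y) → (Σ y : X, Path x₀ y) → Prop :=
  fun a b => ∃ h : a.1 = b.1, loopClass (a.2.trans ((b.2.cast rfl h).symm)) ∈ K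

/-- The set `X̃_K` of `K`-classes of paths emanating from `x₀`. -/
def Xtilde (x₀ : X) (K : Subgroup (FundamentalGroup X x₀)) := Quot (hrel K)

/-- The whisker topology on `X̃_K`, with basic open sets `B_K([α], U)`. -/
def whiskerTop (x₀ : X) (K : Subgroup (FundamentalGroup X x₀)) :
    TopologicalSpace (Xtilde x₀ K) :=
  TopologicalSpace.generateFrom
    {S | ∃ (y : X) (α : Path x₀ y) (U : Set X), IsOpen U ∧ y ∈ U ∧
      S = {q | ∃ (z : X) (lam : Path y z), (∀ t, lam t ∈ U) ∧
            q = Quot.mk _ ⟨z, α.trans lam⟩}}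

/-- The lasso topology on `X̃_K`, with basic open sets `B_K([α], 𝒰, U)`. -/
def lassoTop (x₀ : X) (K : Subgroup (FundamentalGroup X x₀)) :
    TopologicalSpace (Xtilde x₀ K) :=
  TopologicalSpace.generateFrom
    {S | ∃ (y : X) (α : Path x₀ y) (𝒰 : Set (Set X)) (U : Set X),
      IsOpenCover 𝒰 ∧ U ∈ 𝒰 ∧ y ∈ U ∧
      S = {q | ∃ (γ : Path y y) (z : X) (δ : Path y z),
            loopClass γ ∈ spanierGroupAt y 𝒰 ∧ (∀ t, δ t ∈ U) ∧
            q = Quot.mk _ ⟨z, (α.trans γ).trans δ⟩}}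

/-- The endpoint projection `p_K : X̃_K → X`, `[α]_K ↦ α(1)`. -/
def endpointMap (x₀ : X) (K : Subgroup (FundamentalGroup X x₀)) : Xtilde x₀ K → X :=
  Quot.lift Sigma.fst (fun _ _ h => h.1)

/-- `f` has the unique path lifting property with respect to the topology `tA` on its domain:
any two continuous lifts of a path that agree at the start point are equal. -/
def HasUniquePathLifting {A B : Type*} (tA : TopologicalSpace A) [TopologicalSpace B]
    (f : A → B) : Prop :=
  ∀ γ₁ γ₂ : I → A, Continuous[inferInstance, tA] γ₁ → Continuous[inferInstance, tA] γ₂ →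
    f ∘ γ₁ = f ∘ γ₂ → γ₁ 0 = γ₂ 0 → γ₁ = γ₂

namespace WLPAux

variable {X : Type*} [TopologicalSpace X]

/-- An element of the fundamental group as a morphism of the fundamental groupoid. -/
def _root_.FundamentalGroup.hom {x : X} (a : FundamentalGroup X x) :
    FundamentalGroupoid.mk x ⟶ FundamentalGroupoid.mk x := a

/-! ### Groupoid algebra for `loopClass` -/

/-- The morphism class of a path in the fundamental groupoid. -/
def hq {x y : X} (p : Path x y) : FundamentalGroupoid.mk x ⟶ FundamentalGroupoid.mk y := ⟦p⟧

theorem hq_trans {x y z : X} (p : Path x y) (q : Path y z) :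
    hq (p.trans q) = hq p ≫ hq q := rfl

theorem hq_refl (x : X) : hq (Path.refl x) = 𝟙 (FundamentalGroupoid.mk x) := rfl

theorem hq_eq_of_homotopic {x y : X} {p q : Path x y} (h : p.Homotopic q) : hq p = hq q :=
  Quotient.sound h

theorem hq_trans_symm {x y : X} (p : Path x y) : hq (p.trans p.symm) = 𝟙 _ :=
  (hq_eq_of_homotopic ⟨Path.Homotopy.reflTransSymm p⟩).symm

theorem hq_symm {x y : X} (p : Path x y) : hq p.symm = Groupoid.inv (hq p) := by
  have h1 : hq p ≫ hq p.symm = 𝟙 _ := by rw [← hq_trans, hq_trans_symm]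
  calc hq p.symm = (Groupoid.inv (hq p) ≫ hq p) ≫ hq p.symm := by
        rw [Groupoid.inv_comp, Category.id_comp]
    _ = Groupoid.inv (hq p) := by rw [Category.assoc, h1, Category.comp_id]

@[simp] theorem ginv_comp_cancel {x y : X} (f : FundamentalGroupoid.mk x ⟶ FundamentalGroupoid.mk y)
    {z : FundamentalGroupoid X} (g : FundamentalGroupoid.mk y ⟶ z) :
    Groupoid.inv f ≫ f ≫ g = g := by rw [← Category.assoc, Groupoid.inv_comp, Category.id_comp]

@[simp] theorem comp_ginv_cancel {x y : X} (f : FundamentalGroupoid.mk x ⟶ FundamentalGroupoid.mk y)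
    {z : FundamentalGroupoid X} (g : FundamentalGroupoid.mk x ⟶ z) :
    f ≫ Groupoid.inv f ≫ g = g := by rw [← Category.assoc, Groupoid.comp_inv, Category.id_comp]

@[simp] theorem ginv_comp {C : Type*} [Groupoid C] {x y z : C} (f : x ⟶ y) (g : y ⟶ z) :
    Groupoid.inv (f ≫ g) = Groupoid.inv g ≫ Groupoid.inv f := by
  rw [Groupoid.inv_eq_inv, Groupoid.inv_eq_inv, Groupoid.inv_eq_inv, IsIso.inv_comp]

@[simp] theorem ginv_ginv {C : Type*} [Groupoid C] {x y : C} (f : x ⟶ y) :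
    Groupoid.inv (Groupoid.inv f) = f := by
  rw [Groupoid.inv_eq_inv, Groupoid.inv_eq_inv, IsIso.inv_inv]

@[simp] theorem ginv_id {C : Type*} [Groupoid C] {x : C} :
    Groupoid.inv (𝟙 x) = 𝟙 x := by
  rw [Groupoid.inv_eq_inv, IsIso.inv_id]

@[simp] theorem loopClass_hom {x : X} (γ : Path x x) : (loopClass γ).hom = hq γ := rfl

@[simp] theorem isoEquivHom_symm_hom {x : X}
    (f : FundamentalGroupoid.mk x ⟶ FundamentalGroupoid.mk x) :
    ((CategoryTheory.Groupoid.isoEquivHom (FundamentalGroupoid.mk x)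
      (FundamentalGroupoid.mk x)).symm f).hom = f := rfl

@[simp] theorem fg_comp_hom {x : X} (a b : FundamentalGroupoid.mk x ⟶ FundamentalGroupoid.mk x) :
    FundamentalGroup.hom (a ≫ b) = FundamentalGroup.hom a ≫ FundamentalGroup.hom b := rfl

@[simp] theorem fg_id_hom (x : X) :
    FundamentalGroup.hom (𝟙 (FundamentalGroupoid.mk x)) = 𝟙 (FundamentalGroupoid.mk x) := rfl

theorem fg_ext {x : X} {a b : FundamentalGroup X x} (h : a.hom = b.hom) : a = b := h

@[simp] theorem fg_mul_hom {x : X} (a b : FundamentalGroup X x) :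
    (a * b).hom = b.hom ≫ a.hom := rfl

@[simp] theorem fg_one_hom (x : X) :
    (1 : FundamentalGroup X x).hom = 𝟙 (FundamentalGroupoid.mk x) := rfl

@[simp] theorem fg_inv_hom {x : X} (a : FundamentalGroup X x) :
    (a⁻¹).hom = Groupoid.inv a.hom := by
  have h1 : a.hom ≫ (a⁻¹).hom = 𝟙 _ := inv_mul_cancel a
  calc (a⁻¹).hom = (Groupoid.inv a.hom ≫ a.hom) ≫ (a⁻¹).hom := by
        rw [Groupoid.inv_comp, Category.id_comp]
    _ = Groupoid.inv a.hom := by rw [Category.assoc, h1, Category.comp_id]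

theorem loopClass_refl (x : X) : loopClass (Path.refl x) = 1 := fg_ext (by simp [hq_refl])

theorem loopClass_symm {x : X} (p : Path x x) :
    loopClass p.symm = (loopClass p)⁻¹ := fg_ext (by simp [hq_symm])

theorem loopClass_trans {x : X} (p q : Path x x) :
    loopClass (p.trans q) = loopClass q * loopClass p := fg_ext (by simp [hq_trans])

section Base

variable {x₀ : X}

/-- Difference loop class of two paths with the same endpoints. -/
def dd {y : X} (u v : Path x₀ y) : FundamentalGroup X x₀ := loopClass (u.trans v.symm)

@[simp] theorem dd_hom {y : X} (u v : Path x₀ y) :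
    (dd u v).hom = hq u ≫ Groupoid.inv (hq v) := by simp [dd, hq_trans, hq_symm]

/-- Conjugate of a loop by a path. -/
def cj {y : X} (u : Path x₀ y) (s : Path y y) : FundamentalGroup X x₀ :=
  loopClass (u.trans (s.trans u.symm))

@[simp] theorem cj_hom {y : X} (u : Path x₀ y) (s : Path y y) :
    (cj u s).hom = hq u ≫ hq s ≫ Groupoid.inv (hq u) := by simp [cj, hq_trans, hq_symm]

theorem dd_self {y : X} (u : Path x₀ y) : dd u u = 1 := fg_ext (by simp)

theorem dd_inv {y : X} (u v : Path x₀ y) : (dd u v)⁻¹ = dd v u := fg_ext (by simp)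

theorem dd_chain {y : X} (u v w : Path x₀ y) : dd u w = dd v w * dd u v := fg_ext (by simp)

/-- Transport of the fundamental group along a path, as a group homomorphism. -/
def tp {y : X} (α : Path x₀ y) : FundamentalGroup X y →* FundamentalGroup X x₀ where
  toFun g := FundamentalGroup.fromArrow (hq α ≫ g.hom ≫ Groupoid.inv (hq α))
  map_one' := fg_ext (by simp [FundamentalGroup.hom])
  map_mul' a b := fg_ext (by simp [FundamentalGroup.hom])

@[simp] theorem tp_hom {y : X} (α : Path x₀ y) (g : FundamentalGroup X y) :
    (tp α g).hom = hq α ≫ g.hom ≫ Groupoid.inv (hq α) := rfl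

/-! ### The relation `hrel` -/

theorem hrel_iff {K : Subgroup (FundamentalGroup X x₀)} {y : X} (u v : Path x₀ y) :
    hrel K ⟨y, u⟩ ⟨y, v⟩ ↔ dd u v ∈ K := by
  constructor
  · rintro ⟨h, hm⟩
    exact hm
  · intro hm
    exact ⟨rfl, hm⟩

theorem hrel_equiv (K : Subgroup (FundamentalGroup X x₀)) : Equivalence (hrel K) := by
  constructor
  · rintro ⟨y, u⟩
    exact (hrel_iff u u).2 (by rw [dd_self]; exact K.one_mem)
  · rintro ⟨y, u⟩ ⟨z, v⟩ ⟨h, hm⟩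
    dsimp at h; subst h
    rw [hrel_iff]
    rw [show (Path.cast v rfl rfl) = v from rfl] at hm
    rw [← dd_inv]
    exact K.inv_mem hm
  · rintro ⟨y, u⟩ ⟨z, v⟩ ⟨w, p⟩ ⟨h1, hm1⟩ ⟨h2, hm2⟩
    dsimp at h1 h2; subst h1; subst h2
    rw [show (Path.cast v rfl rfl) = v from rfl] at hm1
    rw [show (Path.cast p rfl rfl) = p from rfl] at hm2
    refine ⟨rfl, ?_⟩
    rw [show (Path.cast p rfl rfl) = p from rfl]
    rw [show loopClass (u.trans p.symm) = dd u p from rfl, dd_chain u v p]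
    exact K.mul_mem hm2 hm1

theorem mk_eq_iff {K : Subgroup (FundamentalGroup X x₀)} {y : X} (u v : Path x₀ y) :
    (Quot.mk (hrel K) ⟨y, u⟩ : Xtilde x₀ K) = Quot.mk (hrel K) ⟨y, v⟩ ↔ dd u v ∈ K := by
  rw [Quot.eq, Equivalence.eqvGen_iff (hrel_equiv K), hrel_iff]

theorem mk_eq_of_hq {K : Subgroup (FundamentalGroup X x₀)} {y : X} {u v : Path x₀ y}
    (h : hq u = hq v) :
    (Quot.mk (hrel K) ⟨y, u⟩ : Xtilde x₀ K) = Quot.mk (hrel K) ⟨y, v⟩ := by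
  rw [mk_eq_iff]
  have : dd u v = 1 := fg_ext (by simp [h])
  rw [this]; exact K.one_mem

@[simp] theorem endpointMap_mk {K : Subgroup (FundamentalGroup X x₀)} {y : X} (u : Path x₀ y) :
    endpointMap x₀ K (Quot.mk (hrel K) ⟨y, u⟩) = y := rfl

theorem rep_at {K : Subgroup (FundamentalGroup X x₀)} (a : Xtilde x₀ K) {y : X}
    (h : endpointMap x₀ K a = y) : ∃ u : Path x₀ y, a = Quot.mk (hrel K) ⟨y, u⟩ := by
  obtain ⟨⟨z, u⟩, rfl⟩ := Quot.exists_rep a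
  obtain rfl : z = y := h
  exact ⟨u, rfl⟩

/-! ### Pointwise membership helpers -/

theorem trans_mem {y z w : X} {p : Path y z} {q : Path z w} {S : Set X}
    (hp : ∀ t, p t ∈ S) (hq' : ∀ t, q t ∈ S) : ∀ t, (p.trans q) t ∈ S := by
  intro t
  rw [Path.trans_apply]
  split
  · exact hp _
  · exact hq' _

theorem symm_mem {y z : X} {p : Path y z} {S : Set X}
    (hp : ∀ t, p t ∈ S) : ∀ t, (p.symm) t ∈ S := by
  intro t
  rw [Path.symm_apply]
  exact hp _

theorem refl_mem {y : X} {S : Set X} (hy : y ∈ S) : ∀ t, (Path.refl y) t ∈ S := by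
  intro t
  show y ∈ S
  exact hy

/-! ### The subgroup `H · {loops in U₀}` -/

/-- The subgroup of the fundamental group consisting of products `h * [Λ]` with `h ∈ H` and
`Λ` a loop inside `U₀`. -/
def KK (H : Subgroup (FundamentalGroup X x₀)) (hN : H.Normal) (U₀ : Set X) (h₀ : x₀ ∈ U₀) :
    Subgroup (FundamentalGroup X x₀) where
  carrier := {g | ∃ h ∈ H, ∃ lam : Path x₀ x₀, (∀ t, lam t ∈ U₀) ∧ g = h * loopClass lam}
  one_mem' := ⟨1, H.one_mem, Path.refl x₀, refl_mem h₀, by rw [loopClass_refl, one_mul]⟩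
  mul_mem' := by
    rintro a b ⟨h1, hh1, l1, hl1, rfl⟩ ⟨h2, hh2, l2, hl2, rfl⟩
    refine ⟨h1 * (loopClass l1 * h2 * (loopClass l1)⁻¹), ?_, l2.trans l1,
      trans_mem hl2 hl1, ?_⟩
    · exact H.mul_mem hh1 (hN.conj_mem h2 hh2 (loopClass l1))
    · rw [loopClass_trans]; group
  inv_mem' := by
    rintro a ⟨h, hh, l, hl, rfl⟩
    refine ⟨(loopClass l)⁻¹ * h⁻¹ * ((loopClass l)⁻¹)⁻¹, hN.conj_mem _ (H.inv_mem hh) _, l.symm,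
      symm_mem hl, ?_⟩
    rw [loopClass_symm]; group

theorem mem_KK_iff {H : Subgroup (FundamentalGroup X x₀)} {hN : H.Normal} {U₀ : Set X}
    {h₀ : x₀ ∈ U₀} {g : FundamentalGroup X x₀} :
    g ∈ KK H hN U₀ h₀ ↔ ∃ h ∈ H, ∃ lam : Path x₀ x₀, (∀ t, lam t ∈ U₀) ∧
      g = h * loopClass lam := Iff.rfl

theorem H_le_KK {H : Subgroup (FundamentalGroup X x₀)} (hN : H.Normal) {U₀ : Set X}
    (h₀ : x₀ ∈ U₀) : H ≤ KK H hN U₀ h₀ := fun h hh =>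
  ⟨h, hh, Path.refl x₀, refl_mem h₀, by rw [loopClass_refl, mul_one]⟩

end Base

end WLPAux

namespace WLPAux

variable {X : Type*} [TopologicalSpace X] {x₀ : X}

/-! ### Whisker and lasso basic sets -/

/-- Basic whisker open set. -/
def wB {y : X} (α : Path x₀ y) (U : Set X) (H : Subgroup (FundamentalGroup X x₀)) :
    Set (Xtilde x₀ H) :=
  {q | ∃ (z : X) (lam : Path y z), (∀ t, lam t ∈ U) ∧ q = Quot.mk _ ⟨z, α.trans lam⟩}

/-- Basic lasso open set. -/
def lB {y : X} (α : Path x₀ y) (𝒰 : Set (Set X)) (U : Set X)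
    (H : Subgroup (FundamentalGroup X x₀)) : Set (Xtilde x₀ H) :=
  {q | ∃ (γ : Path y y) (z : X) (δ : Path y z),
    loopClass γ ∈ spanierGroupAt y 𝒰 ∧ (∀ t, δ t ∈ U) ∧
    q = Quot.mk _ ⟨z, (α.trans γ).trans δ⟩}

theorem wB_isOpen {H : Subgroup (FundamentalGroup X x₀)} {y : X} (α : Path x₀ y) {U : Set X}
    (hU : IsOpen U) (hy : y ∈ U) : IsOpen[whiskerTop x₀ H] (wB α U H) :=
  TopologicalSpace.GenerateOpen.basic _ ⟨y, α, U, hU, hy, rfl⟩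

theorem mem_wB_self {H : Subgroup (FundamentalGroup X x₀)} {y : X} (α : Path x₀ y) {U : Set X}
    (hy : y ∈ U) : (Quot.mk (hrel H) ⟨y, α⟩ : Xtilde x₀ H) ∈ wB α U H :=
  ⟨y, Path.refl y, refl_mem hy, (mk_eq_of_hq (by rw [hq_trans, hq_refl, Category.comp_id])).symm⟩

theorem lB_isOpen {H : Subgroup (FundamentalGroup X x₀)} {y : X} (α : Path x₀ y)
    {𝒰 : Set (Set X)} {U : Set X} (hcov : IsOpenCover 𝒰) (hU : U ∈ 𝒰) (hy : y ∈ U) :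
    IsOpen[lassoTop x₀ H] (lB α 𝒰 U H) :=
  TopologicalSpace.GenerateOpen.basic _ ⟨y, α, 𝒰, U, hcov, hU, hy, rfl⟩

theorem mem_lB_self {H : Subgroup (FundamentalGroup X x₀)} {y : X} (α : Path x₀ y)
    {𝒰 : Set (Set X)} {U : Set X} (hy : y ∈ U) :
    (Quot.mk (hrel H) ⟨y, α⟩ : Xtilde x₀ H) ∈ lB α 𝒰 U H := by
  refine ⟨Path.refl y, y, Path.refl y, ?_, refl_mem hy, ?_⟩
  · rw [loopClass_refl]; exact Subgroup.one_mem _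
  · refine (mk_eq_of_hq ?_).symm
    rw [hq_trans, hq_trans, hq_refl, Category.comp_id, Category.comp_id]

/-- Every basic lasso open set is whisker open. -/
theorem lB_isOpen_whisker {H : Subgroup (FundamentalGroup X x₀)} {y : X} (α : Path x₀ y)
    {𝒰 : Set (Set X)} {U : Set X} (hcov : IsOpenCover 𝒰) (hU : U ∈ 𝒰) :
    IsOpen[whiskerTop x₀ H] (lB α 𝒰 U H) := by
  letI := whiskerTop x₀ H
  rw [isOpen_iff_forall_mem_open]
  rintro q ⟨g, z, δ, hg, hδ, rfl⟩
  have hz : z ∈ U := by rw [← δ.target]; exact hδ 1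
  refine ⟨wB ((α.trans g).trans δ) U H, ?_, wB_isOpen _ (hcov.1 U hU) hz, mem_wB_self _ hz⟩
  rintro q' ⟨w, lam, hlam, rfl⟩
  refine ⟨g, w, δ.trans lam, hg, trans_mem hδ hlam, mk_eq_of_hq ?_⟩
  simp [hq_trans]

/-- The endpoint projection is continuous for the lasso topology. -/
theorem endpointMap_lasso_continuous (H : Subgroup (FundamentalGroup X x₀)) :
    Continuous[lassoTop x₀ H, _] (endpointMap x₀ H) := by
  letI := lassoTop x₀ H
  rw [continuous_def]
  intro O hO
  rw [isOpen_iff_forall_mem_open]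
  intro q hqO
  obtain ⟨⟨y, u⟩, rfl⟩ := Quot.exists_rep q
  have hyO : y ∈ O := hqO
  have hcov : IsOpenCover ({O, Set.univ} : Set (Set X)) := by
    constructor
    · rintro U (rfl | rfl)
      · exact hO
      · exact isOpen_univ
    · apply Set.eq_univ_of_univ_subset
      intro x _
      exact ⟨Set.univ, Or.inr rfl, trivial⟩
  refine ⟨lB u {O, Set.univ} O H, ?_, lB_isOpen u hcov (Or.inl rfl) hyO, mem_lB_self u hyO⟩
  rintro q' ⟨g, z, δ, hg, hδ, rfl⟩
  show z ∈ O
  rw [← δ.target]; exact hδ 1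

/-! ### The SLT cover and absorption -/

theorem exists_good_cover [LocallyPathConnectedSpace X] {H : Subgroup (FundamentalGroup X x₀)}
    (hN : H.Normal) (hSLT : StrongHSLTAt x₀ H) {U₀ : Set X} (hU₀ : IsOpen U₀) (h₀ : x₀ ∈ U₀) :
    ∃ 𝒰 : Set (Set X), IsOpenCover 𝒰 ∧
      ∀ V ∈ 𝒰, ∀ (y : X) (bt : Path y y), (∀ t, bt t ∈ V) → ∀ τ : Path x₀ y,
        cj τ bt ∈ KK H hN U₀ h₀ := by
  choose V hVopen hxV hVprop using fun x => hSLT x U₀ hU₀ h₀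
  refine ⟨Set.range (fun x => pathComponentIn (V x) x), ⟨?_, ?_⟩, ?_⟩
  · rintro _ ⟨x, rfl⟩
    exact (hVopen x).pathComponentIn x
  · apply Set.eq_univ_of_univ_subset
    intro y _
    exact ⟨pathComponentIn (V y) y, ⟨y, rfl⟩, mem_pathComponentIn_self (hxV y)⟩
  · rintro _ ⟨x, rfl⟩ y bt hbt τ
    have hy : y ∈ pathComponentIn (V x) x := by rw [← bt.source]; exact hbt 0
    have hJ : JoinedIn (pathComponentIn (V x) x) x y :=
      (isPathConnected_pathComponentIn (hxV x)).joinedIn x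
        (mem_pathComponentIn_self (hxV x)) y hy
    set w : Path x y := hJ.somePath with hw
    have hwmem : ∀ t, w t ∈ pathComponentIn (V x) x := hJ.somePath_mem
    set bt' : Path x x := w.trans (bt.trans w.symm) with hbt'def
    have hbt' : ∀ t, bt' t ∈ V x := fun t =>
      pathComponentIn_subset (trans_mem hwmem (trans_mem hbt (symm_mem hwmem)) t)
    obtain ⟨lam, hlam, hmem⟩ := hVprop x bt' hbt' (τ.trans w.symm)
    have hkey : cj τ bt = cj (τ.trans w.symm) bt' := by
      apply fg_ext
      simp [hbt'def, hq_trans, hq_symm]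
    have hrw : cj (τ.trans w.symm) bt' =
        loopClass ((τ.trans w.symm).trans (bt'.trans (τ.trans w.symm).symm)) := rfl
    have : cj τ bt = (cj (τ.trans w.symm) bt' * (loopClass lam)⁻¹) * loopClass lam := by
      rw [hkey]; group
    exact ⟨_, by rw [← hrw] at hmem; exact hmem, lam, hlam, this⟩

theorem spanier_absorb {H : Subgroup (FundamentalGroup X x₀)} {hN : H.Normal} {U₀ : Set X}
    {h₀ : x₀ ∈ U₀} {𝒰 : Set (Set X)}
    (habs : ∀ V ∈ 𝒰, ∀ (y : X) (bt : Path y y), (∀ t, bt t ∈ V) → ∀ τ : Path x₀ y,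
      cj τ bt ∈ KK H hN U₀ h₀)
    {y : X} (α : Path x₀ y) {g : FundamentalGroup X y} (hg : g ∈ spanierGroupAt y 𝒰) :
    tp α g ∈ KK H hN U₀ h₀ := by
  refine Subgroup.closure_induction ?_ ?_ ?_ ?_ hg
  · rintro g ⟨y₂, sg, bt, U, hU, hbt, rfl⟩
    have : tp α (loopClass (sg.trans (bt.trans sg.symm))) = cj (α.trans sg) bt := by
      apply fg_ext
      simp [hq_trans, hq_symm]
    rw [this]
    exact habs U hU y₂ bt hbt (α.trans sg)
  · rw [map_one]; exact Subgroup.one_mem _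
  · intro a b _ _ ha hb
    rw [map_mul]; exact Subgroup.mul_mem _ ha hb
  · intro a _ ha
    rw [map_inv]; exact Subgroup.inv_mem _ ha

end WLPAux

namespace WLPAux

variable {X : Type*} [TopologicalSpace X] {x₀ : X}

/-- Whisker unique path lifting forces elements that are `H`-close to arbitrarily small loops
to lie in `H`. -/
theorem absorb_to_H {H : Subgroup (FundamentalGroup X x₀)} (hN : H.Normal)
    (hUPL : HasUniquePathLifting (whiskerTop x₀ H) (endpointMap x₀ H))
    (g : FundamentalGroup X x₀)
    (hg : ∀ U₀ : Set X, IsOpen U₀ → x₀ ∈ U₀ → ∃ h ∈ H, ∃ lam : Path x₀ x₀,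
      (∀ t, lam t ∈ U₀) ∧ g = h * loopClass lam) : g ∈ H := by
  letI : TopologicalSpace (Xtilde x₀ H) := whiskerTop x₀ H
  obtain ⟨Γ, hΓ0⟩ := Quotient.exists_rep g.hom
  have hΓ : hq Γ = g.hom := hΓ0
  haveI : ∀ t : I, Decidable (t = 0) := fun t => Classical.propDecidable _
  set c₁ : I → Xtilde x₀ H := fun _ => Quot.mk (hrel H) ⟨x₀, Path.refl x₀⟩ with hc₁def
  set c₂ : I → Xtilde x₀ H := fun t =>
    if t = 0 then Quot.mk (hrel H) ⟨x₀, Path.refl x₀⟩ else Quot.mk (hrel H) ⟨x₀, Γ⟩ with hc₂def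
  have hc₂eq : ∀ t : I, c₂ t =
      (if t = 0 then Quot.mk (hrel H) ⟨x₀, Path.refl x₀⟩ else Quot.mk (hrel H) ⟨x₀, Γ⟩) :=
    fun t => rfl
  have hc₂pos : ∀ t : I, t = 0 → c₂ t = Quot.mk (hrel H) ⟨x₀, Path.refl x₀⟩ := by
    intro t ht
    rw [hc₂eq t, if_pos ht]
  have hc₂neg : ∀ t : I, t ≠ 0 → c₂ t = Quot.mk (hrel H) ⟨x₀, Γ⟩ := by
    intro t ht
    rw [hc₂eq t, if_neg ht]
  -- the key step: any basic whisker neighborhood of `[refl]` contains `[Γ]`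
  have key : ∀ (y : X) (α : Path x₀ y) (U : Set X), IsOpen U → y ∈ U →
      (Quot.mk (hrel H) ⟨x₀, Path.refl x₀⟩ : Xtilde x₀ H) ∈ wB α U H →
      (Quot.mk (hrel H) ⟨x₀, Γ⟩ : Xtilde x₀ H) ∈ wB α U H := by
    rintro y α U hU hyU ⟨z, lam, hlam, heq⟩
    have hz : (x₀ : X) = z := congrArg (endpointMap x₀ H) heq
    subst hz
    have hx₀U : x₀ ∈ U := by rw [← lam.target]; exact hlam 1
    obtain ⟨h, hh, Λ, hΛ, hgeq⟩ := hg U hU hx₀U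
    refine ⟨x₀, lam.trans Λ, trans_mem hlam hΛ, ?_⟩
    refine (mk_eq_iff _ _).2 ?_
    have e₂ : dd (Path.refl x₀) (α.trans lam) ∈ H := (mk_eq_iff _ _).1 heq
    have w' : (loopClass Λ)⁻¹ * h * ((loopClass Λ)⁻¹)⁻¹ ∈ H := hN.conj_mem h hh _
    have hcalc : dd Γ (α.trans (lam.trans Λ)) =
        dd (Path.refl x₀) (α.trans lam) * ((loopClass Λ)⁻¹ * h * ((loopClass Λ)⁻¹)⁻¹) := by
      apply fg_ext
      have hghom : g.hom = hq Λ ≫ h.hom := by rw [hgeq]; simp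
      simp [hq_trans, hq_symm, hq_refl, hΓ, hghom]
    rw [hcalc]
    exact H.mul_mem e₂ w'
  -- continuity of c₂ in the whisker topology
  have hcont₂ : Continuous[inferInstance, whiskerTop x₀ H] c₂ := by
    apply continuous_generateFrom_iff.2
    rintro s ⟨y, α, U, hU, hyU, rfl⟩
    by_cases hA : (Quot.mk (hrel H) ⟨x₀, Path.refl x₀⟩ : Xtilde x₀ H) ∈ wB α U H
    · have hB : (Quot.mk (hrel H) ⟨x₀, Γ⟩ : Xtilde x₀ H) ∈ wB α U H := key y α U hU hyU hA
      have : c₂ ⁻¹' (wB α U H) = Set.univ := by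
        apply Set.eq_univ_of_forall
        intro t
        show c₂ t ∈ wB α U H
        by_cases ht : t = 0
        · rw [hc₂pos t ht]; exact hA
        · rw [hc₂neg t ht]; exact hB
      show IsOpen (c₂ ⁻¹' wB α U H)
      rw [this]
      exact isOpen_univ
    · by_cases hB : (Quot.mk (hrel H) ⟨x₀, Γ⟩ : Xtilde x₀ H) ∈ wB α U H
      · have : c₂ ⁻¹' (wB α U H) = {(0 : I)}ᶜ := by
          ext t
          simp only [Set.mem_preimage, Set.mem_compl_iff, Set.mem_singleton_iff]
          constructor
          · intro hm ht
            rw [hc₂pos t ht] at hm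
            exact hA hm
          · intro ht
            rw [hc₂neg t ht]
            exact hB
        show IsOpen (c₂ ⁻¹' wB α U H)
        rw [this]
        exact isOpen_compl_singleton
      · have : c₂ ⁻¹' (wB α U H) = ∅ := by
          ext t
          simp only [Set.mem_preimage, Set.mem_empty_iff_false, iff_false]
          intro hm
          by_cases ht : t = 0
          · rw [hc₂pos t ht] at hm; exact hA hm
          · rw [hc₂neg t ht] at hm; exact hB hm
        show IsOpen (c₂ ⁻¹' wB α U H)
        rw [this]
        exact isOpen_empty
  have hproj : endpointMap x₀ H ∘ c₁ = endpointMap x₀ H ∘ c₂ := by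
    funext t
    show endpointMap x₀ H (c₁ t) = endpointMap x₀ H (c₂ t)
    by_cases ht : t = 0
    · rw [hc₂pos t ht]
    · rw [hc₂neg t ht]
      rfl
  have h0 : c₁ 0 = c₂ 0 := (hc₂pos 0 rfl).symm
  have := hUPL c₁ c₂ continuous_const hcont₂ hproj h0
  have h1 : (Quot.mk (hrel H) ⟨x₀, Path.refl x₀⟩ : Xtilde x₀ H) = Quot.mk (hrel H) ⟨x₀, Γ⟩ := by
    have := congrFun this 1
    rwa [hc₂neg 1 (by norm_num : (1 : I) ≠ 0)] at this
  have hdd : dd (Path.refl x₀) Γ ∈ H := (mk_eq_iff _ _).1 h1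
  have : dd (Path.refl x₀) Γ = g⁻¹ := by
    apply fg_ext
    simp [hq_refl, hΓ]
  rw [this] at hdd
  simpa using H.inv_mem hdd

end WLPAux

namespace WLPAux

variable {X : Type*} [TopologicalSpace X] {x₀ : X}

theorem dd_mem_of_reps {H : Subgroup (FundamentalGroup X x₀)} {y : X}
    {a b : Xtilde x₀ H} {u u₂ v v₂ : Path x₀ y}
    (K' : Subgroup (FundamentalGroup X x₀)) (hHK : H ≤ K')
    (h1 : a = Quot.mk (hrel H) ⟨y, u⟩) (h2 : a = Quot.mk (hrel H) ⟨y, u₂⟩)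
    (h3 : b = Quot.mk (hrel H) ⟨y, v⟩) (h4 : b = Quot.mk (hrel H) ⟨y, v₂⟩)
    (hm : dd u v ∈ K') : dd u₂ v₂ ∈ K' := by
  have e1 : dd u₂ u ∈ H := (mk_eq_iff _ _).1 (h2.symm.trans h1)
  have e2 : dd v v₂ ∈ H := (mk_eq_iff _ _).1 (h3.symm.trans h4)
  have : dd u₂ v₂ = dd v v₂ * (dd u v * dd u₂ u) := by
    rw [← dd_chain u₂ u v, ← dd_chain u₂ v v₂]
  rw [this]
  exact K'.mul_mem (hHK e2) (K'.mul_mem hm (hHK e1))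

/-- The main chaining lemma: two lasso-continuous lifts of the same path which agree at `0`
are, at each time, related by an element of `KK H hN U₀ h₀` for every `U₀`. -/
theorem chain_lemma [LocallyPathConnectedSpace X] {H : Subgroup (FundamentalGroup X x₀)}
    (hN : H.Normal) (hSLT : StrongHSLTAt x₀ H)
    (γ₁ γ₂ : I → Xtilde x₀ H)
    (hc₁ : Continuous[inferInstance, lassoTop x₀ H] γ₁) (hc₂ : Continuous[inferInstance, lassoTop x₀ H] γ₂)
    (hpr : endpointMap x₀ H ∘ γ₁ = endpointMap x₀ H ∘ γ₂) (h0 : γ₁ 0 = γ₂ 0)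
    {U₀ : Set X} (hU₀ : IsOpen U₀) (h₀ : x₀ ∈ U₀) (t : I) :
    ∃ u v : Path x₀ (endpointMap x₀ H (γ₁ t)),
      γ₁ t = Quot.mk (hrel H) ⟨_, u⟩ ∧ γ₂ t = Quot.mk (hrel H) ⟨_, v⟩ ∧
      dd u v ∈ KK H hN U₀ h₀ := by
  letI : TopologicalSpace (Xtilde x₀ H) := lassoTop x₀ H
  obtain ⟨𝒰, hcov, habs⟩ := exists_good_cover hN hSLT hU₀ h₀
  obtain ⟨f, hfdef⟩ : ∃ f : I → X, f = endpointMap x₀ H ∘ γ₁ := ⟨_, rfl⟩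
  have hpr₁ : ∀ s : I, endpointMap x₀ H (γ₁ s) = f s := fun s => (congrFun hfdef s).symm
  have hpr' : ∀ s : I, endpointMap x₀ H (γ₂ s) = f s := fun s =>
    (congrFun hpr s).symm.trans (hpr₁ s)
  set P : I → Prop := fun s => ∃ u v : Path x₀ (f s),
    γ₁ s = Quot.mk (hrel H) ⟨f s, u⟩ ∧ γ₂ s = Quot.mk (hrel H) ⟨f s, v⟩ ∧
    dd u v ∈ KK H hN U₀ h₀ with hPdef
  -- key local step
  have hloc : ∀ t₁ : I, ∃ N ∈ 𝓝 t₁, ∀ s ∈ N, (P s ↔ P t₁) := by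
    intro t₁
    obtain ⟨u, hu⟩ := rep_at (γ₁ t₁) (hpr₁ t₁)
    obtain ⟨v, hv⟩ := rep_at (γ₂ t₁) (hpr' t₁)
    obtain ⟨V, hV𝒰, hfV⟩ : ∃ V ∈ 𝒰, f t₁ ∈ V := by
      have : f t₁ ∈ ⋃₀ 𝒰 := by rw [hcov.2]; trivial
      exact this
    have hO₁ : IsOpen (γ₁ ⁻¹' (lB u 𝒰 V H)) :=
      hc₁.isOpen_preimage _ (lB_isOpen u hcov hV𝒰 hfV)
    have hO₂ : IsOpen (γ₂ ⁻¹' (lB v 𝒰 V H)) :=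
      hc₂.isOpen_preimage _ (lB_isOpen v hcov hV𝒰 hfV)
    have hm₁ : γ₁ t₁ ∈ lB u 𝒰 V H :=
      Set.mem_of_eq_of_mem hu (mem_lB_self u hfV)
    have hm₂ : γ₂ t₁ ∈ lB v 𝒰 V H :=
      Set.mem_of_eq_of_mem hv (mem_lB_self v hfV)
    refine ⟨γ₁ ⁻¹' (lB u 𝒰 V H) ∩ γ₂ ⁻¹' (lB v 𝒰 V H),
      Filter.inter_mem (hO₁.mem_nhds hm₁) (hO₂.mem_nhds hm₂), ?_⟩
    rintro s ⟨hs₁, hs₂⟩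
    obtain ⟨g₁, z₁, δ₁, hg₁, hδ₁, he₁⟩ := hs₁
    obtain ⟨g₂, z₂, δ₂, hg₂, hδ₂, he₂⟩ := hs₂
    have hz₁ : z₁ = f s := (congrArg (endpointMap x₀ H) he₁).symm.trans (hpr₁ s)
    subst hz₁
    have hz₂ : z₂ = f s := (congrArg (endpointMap x₀ H) he₂).symm.trans (hpr' s)
    subst hz₂
    set u' : Path x₀ (f s) := (u.trans g₁).trans δ₁ with hu'def
    set v' : Path x₀ (f s) := (v.trans g₂).trans δ₂ with hv'def
    set k₁ : FundamentalGroup X x₀ := (tp v (loopClass g₂))⁻¹ with hk₁def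
    set k₂ : FundamentalGroup X x₀ :=
      cj u (δ₁.trans δ₂.symm) * tp u (loopClass g₁) with hk₂def
    have hk₁ : k₁ ∈ KK H hN U₀ h₀ :=
      Subgroup.inv_mem _ (spanier_absorb habs v hg₂)
    have hk₂ : k₂ ∈ KK H hN U₀ h₀ :=
      Subgroup.mul_mem _
        (habs V hV𝒰 (f t₁) (δ₁.trans δ₂.symm) (trans_mem hδ₁ (symm_mem hδ₂)) u)
        (spanier_absorb habs u hg₁)
    have hkey : dd u' v' = k₁ * (dd u v * k₂) := by
      apply fg_ext
      simp [hu'def, hv'def, hk₁def, hk₂def, hq_trans, hq_symm]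
    constructor
    · -- P s → P t₁
      rintro ⟨u₂, v₂, h1, h2, hm⟩
      have hmm : dd u' v' ∈ KK H hN U₀ h₀ :=
        dd_mem_of_reps _ (H_le_KK hN h₀) h1 he₁ h2 he₂ hm
      refine ⟨u, v, hu, hv, ?_⟩
      have : dd u v = k₁⁻¹ * dd u' v' * k₂⁻¹ := by rw [hkey]; group
      rw [this]
      exact Subgroup.mul_mem _ (Subgroup.mul_mem _ (Subgroup.inv_mem _ hk₁) hmm)
        (Subgroup.inv_mem _ hk₂)
    · -- P t₁ → P s
      rintro ⟨u₂, v₂, h1, h2, hm⟩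
      have hm' : dd u v ∈ KK H hN U₀ h₀ :=
        dd_mem_of_reps _ (H_le_KK hN h₀) h1 hu h2 hv hm
      refine ⟨u', v', he₁, he₂, ?_⟩
      rw [hkey]
      exact Subgroup.mul_mem _ hk₁ (Subgroup.mul_mem _ hm' hk₂)
  -- clopen argument
  have hopen : IsOpen {s | P s} := by
    rw [isOpen_iff_mem_nhds]
    intro s hs
    obtain ⟨N, hN𝓝, hNs⟩ := hloc s
    exact Filter.mem_of_superset hN𝓝 (fun r hr => (hNs r hr).2 hs)
  have hclosed : IsClosed {s | P s} := by
    rw [← isOpen_compl_iff, isOpen_iff_mem_nhds]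
    intro s hs
    obtain ⟨N, hN𝓝, hNs⟩ := hloc s
    exact Filter.mem_of_superset hN𝓝 (fun r hr hPr => hs ((hNs r hr).1 hPr))
  have h0P : P 0 := by
    obtain ⟨u, hu⟩ := rep_at (γ₁ 0) (hpr₁ 0)
    exact ⟨u, u, hu, by rw [← h0]; exact hu, by rw [dd_self]; exact Subgroup.one_mem _⟩
  have : {s | P s} = Set.univ := by
    rcases isClopen_iff.1 ⟨hclosed, hopen⟩ with h | h
    · exact absurd (h ▸ (show (0:I) ∈ {s | P s} from h0P)) (Set.notMem_empty _)
    · exact h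
  subst hfdef
  exact Set.eq_univ_iff_forall.mp this t

end WLPAux

open WLPAux in
theorem whisker_upl_iff_lasso_upl [LocallyPathConnectedSpace X]
    (x₀ : X) (H : Subgroup (FundamentalGroup X x₀)) (hN : H.Normal)
    (hSLT : StrongHSLTAt x₀ H) :
    HasUniquePathLifting (whiskerTop x₀ H) (endpointMap x₀ H) ↔
      HasUniquePathLifting (lassoTop x₀ H) (endpointMap x₀ H) := by
  constructor
  · -- whisker UPL → lasso UPL (hard direction)
    intro hUPL γ₁ γ₂ hc₁ hc₂ hpr h0
    funext t
    obtain ⟨u, hu⟩ := rep_at (γ₁ t) rfl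
    obtain ⟨v, hv⟩ := rep_at (γ₂ t) ((congrFun hpr t).symm : endpointMap x₀ H (γ₂ t) = _)
    have hKK : ∀ U₀ : Set X, IsOpen U₀ → x₀ ∈ U₀ → ∃ h ∈ H, ∃ lam : Path x₀ x₀,
        (∀ s, lam s ∈ U₀) ∧ dd u v = h * loopClass lam := by
      intro U₀ hU₀ h₀
      obtain ⟨u₂, v₂, h1, h2, hm⟩ := chain_lemma hN hSLT γ₁ γ₂ hc₁ hc₂ hpr h0 hU₀ h₀ t
      exact dd_mem_of_reps (KK H hN U₀ h₀) (H_le_KK hN h₀) h1 hu h2 hv hm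
    have hH : dd u v ∈ H := absorb_to_H hN hUPL (dd u v) hKK
    rw [hu, hv]
    exact (mk_eq_iff u v).2 hH
  · -- lasso UPL → whisker UPL (easy direction)
    intro hUPL γ₁ γ₂ hc₁ hc₂ hpr h0
    have lasso_cont : ∀ γ : I → Xtilde x₀ H, Continuous[inferInstance, whiskerTop x₀ H] γ →
        Continuous[inferInstance, lassoTop x₀ H] γ := by
      intro γ hγ
      letI : TopologicalSpace (Xtilde x₀ H) := whiskerTop x₀ H
      apply continuous_generateFrom_iff.2
      rintro s ⟨y, α, 𝒰, U, hcov, hU, hyU, rfl⟩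
      exact hγ.isOpen_preimage _ (lB_isOpen_whisker α hcov hU)
    exact hUPL γ₁ γ₂ (lasso_cont γ₁ hc₁) (lasso_cont γ₂ hc₂) hpr h0

end
end

section
/- If p : X̃ → X is a semicovering map and X is a strong SLT space, then X̃ is a strong SLT space. -/
open CategoryTheory unitInterval
open scoped Topology

attribute [local instance] Path.Homotopic.setoid

noncomputable section

variable {X : Type*} [TopologicalSpace X]

/-- A semicovering map: a local homeomorphism with unique continuous lifting of paths
and of homotopies. -/
structure IsSemicoveringMap {E : Type*} [TopologicalSpace E] (p : E → X) : Prop where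
  isLocalHomeomorph : IsLocalHomeomorph p
  path_lift : ∀ (γ : C(I, X)) (e : E), p e = γ 0 →
    ∃! γ' : C(I, E), p ∘ γ' = γ ∧ γ' 0 = e
  homotopy_lift : ∀ (Hm : C(I × I, X)) (e : E), p e = Hm (0, 0) →
    ∃! H' : C(I × I, E), p ∘ H' = Hm ∧ H' (0, 0) = e

/-- `X` is a strong SLT space: for all points `x, y` and every open neighborhood `U` of `x`
there is an open neighborhood `V` of `y` such that every conjugate `α∗β∗α⁻¹` of a loop `β`
in `V` by a path `α` from `x` to `y` is path-homotopic to a loop `λ` in `U`. -/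
def StrongSLT (X : Type*) [TopologicalSpace X] : Prop :=
  ∀ (x y : X) (U : Set X), IsOpen U → x ∈ U →
    ∃ V : Set X, IsOpen V ∧ y ∈ V ∧
      ∀ (α : Path x y) (β : Path y y), (∀ t, β t ∈ V) →
        ∃ lam : Path x x, (∀ t, lam t ∈ U) ∧
          loopClass (α.trans (β.trans α.symm)) = loopClass lam

/-- `loopClass` is injective up to path homotopy. -/
lemma loopClass_eq_iff {x : X} (γ₁ γ₂ : Path x x) :
    loopClass γ₁ = loopClass γ₂ ↔ γ₁.Homotopic γ₂ := by
  constructor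
  · intro h
    exact Quotient.exact h
  · intro h
    exact Quotient.sound h

/-- Uniqueness of path lifts. -/
lemma IsSemicoveringMap.lift_unique {E : Type*} [TopologicalSpace E] {p : E → X}
    (hp : IsSemicoveringMap p) (γ₁ γ₂ : C(I, E))
    (h : p ∘ γ₁ = p ∘ γ₂) (h0 : γ₁ 0 = γ₂ 0) : γ₁ = γ₂ := by
  have pc : Continuous p := hp.isLocalHomeomorph.continuous
  obtain ⟨γ', -, huniq⟩ :=
    hp.path_lift ((⟨p, pc⟩ : C(E, X)).comp γ₁) (γ₁ 0) rfl
  exact (huniq γ₁ ⟨rfl, rfl⟩).trans (huniq γ₂ ⟨h.symm, h0.symm⟩).symm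

/-- Injectivity of the induced map on path-homotopy classes of loops. -/
lemma IsSemicoveringMap.homotopic_of_map_homotopic {E : Type*} [TopologicalSpace E] {p : E → X}
    (hp : IsSemicoveringMap p) {e₀ : E} (a b : Path e₀ e₀)
    (h : (a.map hp.isLocalHomeomorph.continuous).Homotopic
      (b.map hp.isLocalHomeomorph.continuous)) : a.Homotopic b := by
  have pc : Continuous p := hp.isLocalHomeomorph.continuous
  obtain ⟨F⟩ := h
  obtain ⟨H', ⟨hHp, hH0⟩, -⟩ := hp.homotopy_lift F.toContinuousMap e₀ (by
    have h00 : F.toContinuousMap ((0 : I), (0 : I)) = (a.map pc) 0 := F.map_zero_left 0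
    rw [h00]; simp)
  have hHp' : ∀ q : I × I, p (H' q) = F q := fun q => congrFun hHp q
  have h0mem : (0 : I) ∈ ({0, 1} : Set I) := Set.mem_insert _ _
  have h1mem : (1 : I) ∈ ({0, 1} : Set I) := Set.mem_insert_of_mem _ rfl
  -- bottom edge: H'(0, t) = a t
  have hedge0 : ∀ t : I, H' (0, t) = a t := by
    have := hp.lift_unique (H'.comp ⟨fun t => ((0 : I), t), by fun_prop⟩)
      a.toContinuousMap (by
        funext t
        show p (H' ((0 : I), t)) = p (a t)
        rw [hHp' ((0 : I), t)]
        exact F.map_zero_left t) (by simpa using hH0)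
    intro t
    exact congrFun (congrArg (fun f : C(I, E) => ⇑f) this) t
  -- left edge: H'(s, 0) = e₀
  have hleft : ∀ s : I, H' (s, 0) = e₀ := by
    have := hp.lift_unique (H'.comp ⟨fun s => (s, (0 : I)), by fun_prop⟩)
      (ContinuousMap.const I e₀) (by
        funext s
        show p (H' (s, (0 : I))) = p e₀
        rw [hHp' (s, (0 : I)), F.eq_fst s h0mem]
        simp) (by simpa using hH0)
    intro s
    exact congrFun (congrArg (fun f : C(I, E) => ⇑f) this) s
  -- right edge: H'(s, 1) = e₀
  have hright : ∀ s : I, H' (s, 1) = e₀ := by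
    have := hp.lift_unique (H'.comp ⟨fun s => (s, (1 : I)), by fun_prop⟩)
      (ContinuousMap.const I e₀) (by
        funext s
        show p (H' (s, (1 : I))) = p e₀
        rw [hHp' (s, (1 : I)), F.eq_fst s h1mem]
        simp) (by
        show H' ((0 : I), (1 : I)) = e₀
        rw [hedge0 1]; simp)
    intro s
    exact congrFun (congrArg (fun f : C(I, E) => ⇑f) this) s
  -- top edge: H'(1, t) = b t
  have hedge1 : ∀ t : I, H' (1, t) = b t := by
    have := hp.lift_unique (H'.comp ⟨fun t => ((1 : I), t), by fun_prop⟩)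
      b.toContinuousMap (by
        funext t
        show p (H' ((1 : I), t)) = p (b t)
        rw [hHp' ((1 : I), t)]
        exact F.map_one_left t) (by
        show H' ((1 : I), (0 : I)) = b 0
        rw [hleft 1]; simp)
    intro t
    exact congrFun (congrArg (fun f : C(I, E) => ⇑f) this) t
  exact ⟨{
    toContinuousMap := H'
    map_zero_left := hedge0
    map_one_left := hedge1
    prop' := by
      intro s t ht
      rcases ht with ht | ht
      · subst ht
        show H' (s, 0) = a 0
        rw [hleft s]; simp
      · simp only [Set.mem_singleton_iff] at ht
        subst ht
        show H' (s, 1) = a 1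
        rw [hright s]; simp }⟩

theorem semicovering_strongSLT_lifts
    {E : Type*} [TopologicalSpace E] (p : E → X) (hp : IsSemicoveringMap p)
    (hX : StrongSLT X) : StrongSLT E := by
  intro e₀ e U hU he₀
  have pc : Continuous p := hp.isLocalHomeomorph.continuous
  -- a chart around e₀ contained in U
  obtain ⟨c, hec, hpc⟩ := hp.isLocalHomeomorph e₀
  set c' : OpenPartialHomeomorph E X := c.restrOpen U hU with hc'
  have hc'coe : ⇑c' = p := by rw [hpc]; rfl
  have hc'symm : ⇑c'.symm = ⇑c.symm := rfl
  have he₀' : e₀ ∈ c'.source := by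
    rw [hc', c.restrOpen_source]; exact ⟨hec, he₀⟩
  have hsubU : c'.source ⊆ U := by
    rw [hc', c.restrOpen_source]; exact fun x hx => hx.2
  have hpe₀ : p e₀ ∈ c'.target := by
    rw [← hc'coe]; exact c'.map_source he₀'
  -- apply strong SLT in X
  obtain ⟨VX, hVXopen, hVXmem, hVX⟩ := hX (p e₀) (p e) c'.target c'.open_target hpe₀
  refine ⟨p ⁻¹' VX, hVXopen.preimage pc, hVXmem, ?_⟩
  intro α β hβ
  obtain ⟨lamX, hlamXmem, hlamX⟩ := hVX (α.map pc) (β.map pc) (fun t => hβ t)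
  -- lift lamX through the chart
  have hmemT : ∀ t, lamX t ∈ c'.target := hlamXmem
  have hcont : Continuous fun t => c'.symm (lamX t) :=
    c'.continuousOn_symm.comp_continuous lamX.continuous hmemT
  have hmemS : ∀ t, c'.symm (lamX t) ∈ c'.source := fun t => c'.map_target (hmemT t)
  have hsymm_pe₀ : c'.symm (p e₀) = e₀ := by
    rw [← congrFun hc'coe e₀]
    exact c'.left_inv he₀'
  set lamE : Path e₀ e₀ :=
    { toFun := fun t => c'.symm (lamX t)
      continuous_toFun := hcont
      source' := by simp only [lamX.source]; exact hsymm_pe₀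
      target' := by simp only [lamX.target]; exact hsymm_pe₀ } with hlamE
  have hplam : ∀ t, p (lamE t) = lamX t := fun t =>
    (congrFun hc'coe (c'.symm (lamX t))).symm.trans (c'.right_inv (hmemT t))
  refine ⟨lamE, fun t => hsubU (hmemS t), ?_⟩
  -- transfer the homotopy
  have hmapeq : lamE.map pc = lamX := by
    ext t
    exact hplam t
  have hmaps : (α.trans (β.trans α.symm)).map pc =
      (α.map pc).trans ((β.map pc).trans ((α.map pc).symm)) := by
    rw [Path.map_trans, Path.map_trans, Path.map_symm]
  have hhom : ((α.trans (β.trans α.symm)).map pc).Homotopic (lamE.map pc) := by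
    rw [hmaps, hmapeq]
    exact (loopClass_eq_iff _ _).mp hlamX
  rw [loopClass_eq_iff]
  exact hp.homotopic_of_map_homotopic _ _ hhom

end
end

section
/- Let X be locally path connected and H an open normal subgroup of π₁^{qtop}(X,x₀). Then X is a strong H-SLT space. -/
open CategoryTheory unitInterval
open scoped Topology

attribute [local instance] Path.Homotopic.setoid

noncomputable section

variable {X : Type*} [TopologicalSpace X]

/-- The quotient topology on the fundamental group induced by the compact-open topology on
the loop space, i.e. the topology of the quasitopological fundamental group `π₁^qtop`. -/
def qtop (x₀ : X) : TopologicalSpace (FundamentalGroup X x₀) :=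
  TopologicalSpace.coinduced (fun γ : Path x₀ x₀ => loopClass γ) inferInstance

/-- The conjugate subgroup `[δ⁻¹ H δ]` of the fundamental group at the endpoint of `δ`. -/
def conjSubgroup {x₀ x : X} (δ : Path x₀ x) (H : Subgroup (FundamentalGroup X x₀)) :
    Subgroup (FundamentalGroup X x) :=
  H.map (FundamentalGroup.fundamentalGroupMulEquivOfPath δ).toMonoidHom

/-- `X` is a strong `H`-SLT space: for every `x ∈ X` and every path `δ` from `x₀` to `x`,
`X` is a strong `[δ⁻¹Hδ]`-SLT space at `x`. -/
def StrongHSLT (x₀ : X) (H : Subgroup (FundamentalGroup X x₀)) : Prop :=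
  ∀ (x : X) (δ : Path x₀ x), StrongHSLTAt x (conjSubgroup δ H)

/-! ### Auxiliary lemmas -/

/-- The homotopy class of a path as a morphism in the fundamental groupoid. -/
def pc {a b : X} (p : Path a b) : FundamentalGroupoid.mk a ⟶ FundamentalGroupoid.mk b := ⟦p⟧

@[simp] lemma pc_trans {a b c : X} (p : Path a b) (q : Path b c) :
    pc (p.trans q) = pc p ≫ pc q := Path.Homotopic.Quotient.mk_trans p q

@[simp] lemma pc_refl (a : X) : pc (Path.refl a) = 𝟙 (FundamentalGroupoid.mk a) := rfl

@[simp] lemma pc_trans_symm {a b : X} (p : Path a b) : pc p ≫ pc p.symm = 𝟙 _ := by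
  rw [← pc_trans]
  exact Quotient.sound ⟨(Path.Homotopy.reflTransSymm p).symm⟩

@[simp] lemma pc_symm_trans {a b : X} (p : Path a b) : pc p.symm ≫ pc p = 𝟙 _ := by
  rw [← pc_trans]
  exact Quotient.sound ⟨(Path.Homotopy.reflSymmTrans p).symm⟩

@[simp] lemma pc_trans_symm_assoc {a b : X} (p : Path a b) {Z : FundamentalGroupoid X}
    (q : FundamentalGroupoid.mk a ⟶ Z) : pc p ≫ pc p.symm ≫ q = q := by
  rw [← Category.assoc, pc_trans_symm, Category.id_comp]

@[simp] lemma pc_symm_trans_assoc {a b : X} (p : Path a b) {Z : FundamentalGroupoid X}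
    (q : FundamentalGroupoid.mk b ⟶ Z) : pc p.symm ≫ pc p ≫ q = q := by
  rw [← Category.assoc, pc_symm_trans, Category.id_comp]

@[simp] lemma loopClass_hom {x : X} (γ : Path x x) : loopClass γ = pc γ := rfl

@[simp] lemma fg_mul_hom {x : X} (a b : FundamentalGroup X x) :
    a * b = b ≫ a := rfl

@[simp] lemma fg_one_hom (x : X) :
    (1 : FundamentalGroup X x) = 𝟙 (FundamentalGroupoid.mk x) := rfl

@[simp] lemma loopClass_inv_hom {x : X} (γ : Path x x) :
    (loopClass γ)⁻¹ = pc γ.symm := by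
  show CategoryTheory.Groupoid.inv (pc γ) = pc γ.symm
  rw [Groupoid.inv_eq_inv]
  exact IsIso.inv_eq_of_hom_inv_id (pc_trans_symm γ)

lemma loopClass_refl (x : X) : loopClass (Path.refl x) = 1 := rfl

lemma equiv_hom {a b : X} (p : Path a b) (g : FundamentalGroup X a) :
    ((FundamentalGroup.fundamentalGroupMulEquivOfPath p) g) = pc p.symm ≫ g ≫ pc p := by
  have h : ((FundamentalGroup.fundamentalGroupMulEquivOfPath p) g)
      = inv (pc p) ≫ g ≫ pc p := by rw [← Groupoid.inv_eq_inv]; rfl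
  rw [h, IsIso.inv_eq_of_hom_inv_id (pc_trans_symm p)]

lemma co_key (z : X) {O : Set C(I, X)} (hO : IsOpen O) {f₀ : C(I, X)} (h₀ : ∀ t, f₀ t = z)
    (hf : f₀ ∈ O) :
    ∃ W : Set X, IsOpen W ∧ z ∈ W ∧ ∀ f : C(I, X), (∀ t, f t ∈ W) → f ∈ O := by
  have hO' : TopologicalSpace.GenerateOpen
      (Set.image2 (fun K U ↦ {f : C(I, X) | Set.MapsTo f K U}) {K | IsCompact K} {U | IsOpen U})
      O := by
    rw [ContinuousMap.compactOpen_eq] at hO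
    exact hO
  clear hO
  induction hO' with
  | basic s hs =>
    obtain ⟨K, hK, U, hU, rfl⟩ := hs
    rcases K.eq_empty_or_nonempty with rfl | ⟨t₀, ht₀⟩
    · exact ⟨Set.univ, isOpen_univ, trivial, fun f _ => Set.mapsTo_empty _ _⟩
    · refine ⟨U, hU, ?_, fun f hfW t ht => hfW t⟩
      have := hf ht₀
      rwa [h₀ t₀] at this
  | univ => exact ⟨Set.univ, isOpen_univ, trivial, fun f _ => trivial⟩
  | inter s t _ _ ihs iht =>
    obtain ⟨W₁, hW₁, hz₁, h₁⟩ := ihs hf.1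
    obtain ⟨W₂, hW₂, hz₂, h₂⟩ := iht hf.2
    exact ⟨W₁ ∩ W₂, hW₁.inter hW₂, ⟨hz₁, hz₂⟩,
      fun f hfW => ⟨h₁ f fun t => (hfW t).1, h₂ f fun t => (hfW t).2⟩⟩
  | sUnion T hT ih =>
    obtain ⟨t, htT, hft⟩ := hf
    obtain ⟨W, hW, hzW, h⟩ := ih t htT hft
    exact ⟨W, hW, hzW, fun f hfW => ⟨t, htT, h f hfW⟩⟩

lemma path_key {z : X} {S : Set (Path z z)} (hS : IsOpen S) (h0 : Path.refl z ∈ S) :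
    ∃ W : Set X, IsOpen W ∧ z ∈ W ∧ ∀ γ : Path z z, (∀ t, γ t ∈ W) → γ ∈ S := by
  obtain ⟨O, hO, hSO⟩ := isOpen_induced_iff.mp hS
  obtain ⟨W, hW, hzW, h⟩ := co_key z hO (f₀ := (Path.refl z : C(I, X))) (fun t => rfl)
    (by rw [← hSO] at h0; exact h0)
  exact ⟨W, hW, hzW, fun γ hγ => hSO ▸ h (γ : C(I, X)) hγ⟩

theorem strongHSLT_of_open_normal_qtop [LocallyPathConnectedSpace X]
    (x₀ : X) (H : Subgroup (FundamentalGroup X x₀)) (hN : H.Normal)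
    (hopen : IsOpen[qtop x₀] (H : Set (FundamentalGroup X x₀))) :
    StrongHSLT x₀ H := by
  intro x δ y U hUopen hxU
  by_cases hex : Nonempty (Path x y)
  · obtain ⟨α₀⟩ := hex
    set η₀ : Path x₀ y := δ.trans α₀ with hη₀def
    have hS : IsOpen {γ : Path x₀ x₀ | loopClass γ ∈ H} := isOpen_coinduced.mp hopen
    have hΦ : Continuous fun β : Path y y => η₀.trans (β.trans η₀.symm) :=
      Continuous.path_trans continuous_const (Continuous.path_trans continuous_id continuous_const)
    have hT : IsOpen {β : Path y y | loopClass (η₀.trans (β.trans η₀.symm)) ∈ H} :=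
      hS.preimage hΦ
    have hrefl : Path.refl y ∈ {β : Path y y | loopClass (η₀.trans (β.trans η₀.symm)) ∈ H} := by
      have : loopClass (η₀.trans ((Path.refl y).trans η₀.symm)) = 1 := by
        simp
      simpa [this] using H.one_mem
    obtain ⟨V, hVopen, hyV, hV⟩ := path_key hT hrefl
    refine ⟨V, hVopen, hyV, ?_⟩
    intro β hβV α
    refine ⟨Path.refl x, fun t => hxU, ?_⟩
    rw [loopClass_refl, inv_one, mul_one]
    set η : Path x₀ y := δ.trans α with hηdef
    set c : FundamentalGroup X x₀ := loopClass (η.trans η₀.symm) with hcdef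
    set h₀ : FundamentalGroup X x₀ := loopClass (η₀.trans (β.trans η₀.symm)) with hh₀def
    have hmem0 : h₀ ∈ H := hV β hβV
    refine Subgroup.mem_map.mpr ⟨loopClass (η.trans (β.trans η.symm)), ?_, ?_⟩
    · have heq : loopClass (η.trans (β.trans η.symm)) = c⁻¹ * h₀ * c := by
        rw [hcdef, loopClass_inv_hom]
        simp [hcdef, hh₀def, hηdef, Path.trans_symm, Path.symm_symm]
      rw [heq]
      simpa using hN.conj_mem _ hmem0 c⁻¹
    · rw [MulEquiv.coe_toMonoidHom, equiv_hom]
      simp [hηdef, Path.trans_symm]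
  · refine ⟨Set.univ, isOpen_univ, trivial, ?_⟩
    intro β _ α
    exact absurd ⟨α⟩ hex

end
end
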